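/- Let ε > 0 and T > 0. Suppose u : ℝ × ℝ² → ℝ is infinitely differentiable, set w = −ε²Δu + f(u), and assume that ∂ₜu = Δw on [0,T] × closure(Ω), that ∂ₙu(t,·) = 0 and ∂ₙw(t,·) = 0 at every point of the four open edges of ∂Ω for every t ∈ [0,T]. Then for every t ∈ (0,T) the map t ↦ E(u(t,·)) is differentiable with d/dt E(u(t,·)) = −∫_Ω |∇w(t,x)|² dx ≤ 0; in particular, the energy t ↦ E(u(t,·)) is non-increasing on [0,T]. -/

import Mathlib

open MeasureTheory Set

noncomputable def pdx (φ : ℝ × ℝ → ℝ) (p : ℝ × ℝ) : ℝ := fderiv ℝ φ p (1, 0)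

noncomputable def pdy (φ : ℝ × ℝ → ℝ) (p : ℝ × ℝ) : ℝ := fderiv ℝ φ p (0, 1)

noncomputable def lap (φ : ℝ × ℝ → ℝ) (p : ℝ × ℝ) : ℝ := pdx (pdx φ) p + pdy (pdy φ) p

/-- The open unit square `Ω = (0,1) × (0,1)`. -/
def unitSq : Set (ℝ × ℝ) := Ioo (0:ℝ) 1 ×ˢ Ioo (0:ℝ) 1

noncomputable def F (s : ℝ) : ℝ := (1/4) * (s^2 - 1)^2

noncomputable def fDW (s : ℝ) : ℝ := s^3 - s

noncomputable def dtu (u : ℝ → ℝ × ℝ → ℝ) (t : ℝ) (p : ℝ × ℝ) : ℝ :=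
  deriv (fun s => u s p) t

def ZeroNormalDeriv (φ : ℝ × ℝ → ℝ) : Prop :=
  (∀ y ∈ Ioo (0:ℝ) 1, -pdx φ (0, y) = 0 ∧ pdx φ (1, y) = 0) ∧
  (∀ x ∈ Ioo (0:ℝ) 1, -pdy φ (x, 0) = 0 ∧ pdy φ (x, 1) = 0)

/-- The Ginzburg–Landau free energy `E(v) = ∫_Ω ((ε²/2)|∇v|² + F(v))`. -/
noncomputable def energy (ε : ℝ) (v : ℝ × ℝ → ℝ) : ℝ :=
  ∫ p in unitSq, (ε^2/2 * ((pdx v p)^2 + (pdy v p)^2) + F (v p))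

namespace CH


abbrev evt : ℝ × ℝ × ℝ := (1, 0, 0)
abbrev evx : ℝ × ℝ × ℝ := (0, 1, 0)
abbrev evy : ℝ × ℝ × ℝ := (0, 0, 1)

lemma contDiff_dapply {E : Type*} [NormedAddCommGroup E] [NormedSpace ℝ E]
    {H : E → ℝ} (hH : ContDiff ℝ (⊤:ℕ∞) H) (v : E) :
    ContDiff ℝ (⊤:ℕ∞) (fun q => fderiv ℝ H q v) :=
  (hH.fderiv_right (m := (⊤:ℕ∞)) (by simp)).clm_apply contDiff_const

lemma contDiff_pdx {φ : ℝ × ℝ → ℝ} (hφ : ContDiff ℝ (⊤:ℕ∞) φ) :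
    ContDiff ℝ (⊤:ℕ∞) (pdx φ) := contDiff_dapply hφ (1, 0)

lemma contDiff_pdy {φ : ℝ × ℝ → ℝ} (hφ : ContDiff ℝ (⊤:ℕ∞) φ) :
    ContDiff ℝ (⊤:ℕ∞) (pdy φ) := contDiff_dapply hφ (0, 1)

lemma contDiff_lap {φ : ℝ × ℝ → ℝ} (hφ : ContDiff ℝ (⊤:ℕ∞) φ) :
    ContDiff ℝ (⊤:ℕ∞) (lap φ) :=
  ((contDiff_pdx (contDiff_pdx hφ)).add (contDiff_pdy (contDiff_pdy hφ)))

lemma contDiff_slice {H : ℝ × ℝ × ℝ → ℝ} (hH : ContDiff ℝ (⊤:ℕ∞) H) (t : ℝ) :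
    ContDiff ℝ (⊤:ℕ∞) (fun q : ℝ × ℝ => H (t, q)) :=
  hH.comp (contDiff_const.prodMk contDiff_id)

lemma hasFDerivAt_slice {H : ℝ × ℝ × ℝ → ℝ} (hH : ContDiff ℝ (⊤:ℕ∞) H) (t : ℝ) (p : ℝ × ℝ) :
    HasFDerivAt (fun q : ℝ × ℝ => H (t, q))
      ((fderiv ℝ H (t, p)).comp (ContinuousLinearMap.inr ℝ ℝ (ℝ × ℝ))) p :=
  ((hH.differentiable (by simp)).differentiableAt.hasFDerivAt).comp p
    (hasFDerivAt_prodMk_right t p)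

lemma pdx_slice {H : ℝ × ℝ × ℝ → ℝ} (hH : ContDiff ℝ (⊤:ℕ∞) H) (t : ℝ) (p : ℝ × ℝ) :
    pdx (fun q => H (t, q)) p = fderiv ℝ H (t, p) evx := by
  rw [pdx, (hasFDerivAt_slice hH t p).fderiv]; rfl

lemma pdy_slice {H : ℝ × ℝ × ℝ → ℝ} (hH : ContDiff ℝ (⊤:ℕ∞) H) (t : ℝ) (p : ℝ × ℝ) :
    pdy (fun q => H (t, q)) p = fderiv ℝ H (t, p) evy := by
  rw [pdy, (hasFDerivAt_slice hH t p).fderiv]; rfl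

lemma hasDerivAt_slice {H : ℝ × ℝ × ℝ → ℝ} (hH : ContDiff ℝ (⊤:ℕ∞) H) (t : ℝ) (p : ℝ × ℝ) :
    HasDerivAt (fun s => H (s, p)) (fderiv ℝ H (t, p) evt) t := by
  have h := ((hH.differentiable (by simp)).differentiableAt.hasFDerivAt (x := (t, p))).comp t
    (hasFDerivAt_prodMk_left (𝕜 := ℝ) t p)
  exact h.hasDerivAt

lemma deriv_slice {H : ℝ × ℝ × ℝ → ℝ} (hH : ContDiff ℝ (⊤:ℕ∞) H) (t : ℝ) (p : ℝ × ℝ) :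
    deriv (fun s => H (s, p)) t = fderiv ℝ H (t, p) evt :=
  (hasDerivAt_slice hH t p).deriv

lemma fderiv_fderiv_apply {H : ℝ × ℝ × ℝ → ℝ} (hH : ContDiff ℝ (⊤:ℕ∞) H)
    (q v w : ℝ × ℝ × ℝ) :
    fderiv ℝ (fun x => fderiv ℝ H x w) q v = fderiv ℝ (fderiv ℝ H) q v w := by
  have hd : DifferentiableAt ℝ (fderiv ℝ H) q :=
    ((hH.fderiv_right (m := (⊤:ℕ∞)) (by simp)).differentiable (by simp)).differentiableAt
  have h := ((ContinuousLinearMap.apply ℝ ℝ w).hasFDerivAt (x := fderiv ℝ H q)).comp q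
    hd.hasFDerivAt
  have h' : HasFDerivAt (fun x => fderiv ℝ H x w)
      (((ContinuousLinearMap.apply ℝ ℝ) w).comp (fderiv ℝ (fderiv ℝ H) q)) q := h
  rw [h'.fderiv]; rfl

lemma clairaut {H : ℝ × ℝ × ℝ → ℝ} (hH : ContDiff ℝ (⊤:ℕ∞) H) (q v w : ℝ × ℝ × ℝ) :
    fderiv ℝ (fun x => fderiv ℝ H x w) q v = fderiv ℝ (fun x => fderiv ℝ H x v) q w := by
  rw [fderiv_fderiv_apply hH, fderiv_fderiv_apply hH]
  exact second_derivative_symmetric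
    (fun y => ((hH.differentiable (by simp)).differentiableAt (x := y)).hasFDerivAt)
    (((hH.fderiv_right (m := (⊤:ℕ∞)) (by simp)).differentiable (by simp)).differentiableAt.hasFDerivAt) v w



lemma closure_unitSq : closure unitSq = Icc (0:ℝ) 1 ×ˢ Icc (0:ℝ) 1 := by
  rw [unitSq, closure_prod_eq, closure_Ioo one_ne_zero.symm]

lemma unitSq_subset_Icc : unitSq ⊆ Icc (0:ℝ) 1 ×ˢ Icc (0:ℝ) 1 :=
  prod_mono Ioo_subset_Icc_self Ioo_subset_Icc_self

lemma measurableSet_unitSq : MeasurableSet unitSq :=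
  measurableSet_Ioo.prod measurableSet_Ioo

lemma isCompact_IccSq : IsCompact (Icc (0:ℝ) 1 ×ˢ Icc (0:ℝ) 1) :=
  isCompact_Icc.prod isCompact_Icc

lemma volume_unitSq_lt_top : volume unitSq < ⊤ :=
  lt_of_le_of_lt (measure_mono unitSq_subset_Icc) isCompact_IccSq.measure_lt_top

lemma integrableOn_unitSq {f : ℝ × ℝ → ℝ} (hf : Continuous f) : IntegrableOn f unitSq :=
  (hf.continuousOn.integrableOn_compact isCompact_IccSq).mono_set unitSq_subset_Icc

lemma Icc_prod : Icc ((0:ℝ), (0:ℝ)) ((1:ℝ), (1:ℝ)) = Icc (0:ℝ) 1 ×ˢ Icc (0:ℝ) 1 :=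
  Icc_prod_eq _ _

lemma unitSq_ae_eq : unitSq =ᵐ[volume] Icc ((0:ℝ), (0:ℝ)) ((1:ℝ), (1:ℝ)) := by
  rw [Icc_prod]
  refine (MeasureTheory.ae_eq_set).2 ⟨?_, ?_⟩
  · rw [diff_eq_empty.2 unitSq_subset_Icc]; simp
  · refine measure_mono_null (fun q hq => ?_) (?_ : volume
      (((Icc (0:ℝ) 1 \ Ioo 0 1) ×ˢ (univ : Set ℝ)) ∪ ((univ : Set ℝ) ×ˢ (Icc (0:ℝ) 1 \ Ioo 0 1))) = 0)
    · obtain ⟨⟨hx, hy⟩, hn⟩ := hq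
      rw [unitSq] at hn
      simp only [mem_prod] at hn
      rcases not_and_or.1 hn with h | h
      · exact Or.inl ⟨⟨hx, h⟩, mem_univ _⟩
      · exact Or.inr ⟨mem_univ _, hy, h⟩
    · have h01 : volume (Icc (0:ℝ) 1 \ Ioo 0 1) = 0 := by
        have : Icc (0:ℝ) 1 \ Ioo 0 1 ⊆ ({0, 1} : Set ℝ) := by
          intro x ⟨⟨h0, h1⟩, hn⟩
          simp only [mem_Ioo, not_and_or, not_lt] at hn
          rcases hn with h | h
          · exact Or.inl (le_antisymm h h0)
          · exact Or.inr (le_antisymm h1 h)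
        exact measure_mono_null this (({0, 1} : Set ℝ).to_countable.measure_zero _)
      refine measure_union_null ?_ ?_ <;>
        · have h2 : volume ({0, 1} : Set ℝ) = 0 :=
            ({0, 1} : Set ℝ).to_countable.measure_zero _
          rw [Measure.volume_eq_prod, Measure.prod_prod]
          simp [h01, h2]

lemma setIntegral_Icc_eq_unitSq (f : ℝ × ℝ → ℝ) :
    ∫ p in Icc ((0:ℝ), (0:ℝ)) ((1:ℝ), (1:ℝ)), f p = ∫ p in unitSq, f p :=
  (setIntegral_congr_set unitSq_ae_eq).symm



lemma green {φ ψ : ℝ × ℝ → ℝ} (hφ : ContDiff ℝ (⊤:ℕ∞) φ) (hψ : ContDiff ℝ (⊤:ℕ∞) ψ)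
    (hbc : ZeroNormalDeriv φ) :
    ∫ p in unitSq, (pdx φ p * pdx ψ p + pdy φ p * pdy ψ p + ψ p * lap φ p) = 0 := by
  set f : ℝ × ℝ → ℝ := fun p => ψ p * pdx φ p with hfdef
  set g : ℝ × ℝ → ℝ := fun p => ψ p * pdy φ p with hgdef
  set f' : ℝ × ℝ → (ℝ × ℝ) →L[ℝ] ℝ :=
    fun p => ψ p • fderiv ℝ (pdx φ) p + pdx φ p • fderiv ℝ ψ p with hf'def
  set g' : ℝ × ℝ → (ℝ × ℝ) →L[ℝ] ℝ :=
    fun p => ψ p • fderiv ℝ (pdy φ) p + pdy φ p • fderiv ℝ ψ p with hg'def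
  have hψd : Differentiable ℝ ψ := hψ.differentiable (by simp)
  have hpx : ContDiff ℝ (⊤:ℕ∞) (pdx φ) := contDiff_pdx hφ
  have hpy : ContDiff ℝ (⊤:ℕ∞) (pdy φ) := contDiff_pdy hφ
  have hdf : ∀ p, HasFDerivAt f (f' p) p := fun p =>
    (hψd p).hasFDerivAt.mul (hpx.differentiable (by simp) p).hasFDerivAt
  have hdg : ∀ p, HasFDerivAt g (g' p) p := fun p =>
    (hψd p).hasFDerivAt.mul (hpy.differentiable (by simp) p).hasFDerivAt
  have hdiv : ∀ p, f' p (1, 0) + g' p (0, 1) =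
      pdx φ p * pdx ψ p + pdy φ p * pdy ψ p + ψ p * lap φ p := by
    intro p
    simp only [hf'def, hg'def, ContinuousLinearMap.add_apply, ContinuousLinearMap.coe_smul',
      Pi.smul_apply, smul_eq_mul]
    show ψ p * pdx (pdx φ) p + pdx φ p * pdx ψ p + (ψ p * pdy (pdy φ) p + pdy φ p * pdy ψ p) = _
    rw [lap]; ring
  have hcont : Continuous (fun p => f' p (1, 0) + g' p (0, 1)) := by
    have : (fun p => f' p (1, 0) + g' p (0, 1)) =
        fun p => pdx φ p * pdx ψ p + pdy φ p * pdy ψ p + ψ p * lap φ p := funext hdiv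
    rw [this]
    exact (((hpx.continuous.mul (contDiff_pdx hψ).continuous).add
      (hpy.continuous.mul (contDiff_pdy hψ).continuous)).add
      (hψ.continuous.mul (contDiff_lap hφ).continuous))
  have key := integral_divergence_prod_Icc_of_hasFDerivAt_off_countable_of_le f g f' g'
    ((0:ℝ), (0:ℝ)) ((1:ℝ), (1:ℝ)) (by constructor <;> norm_num) ∅ countable_empty
    ((hψ.continuous.mul hpx.continuous).continuousOn)
    ((hψ.continuous.mul hpy.continuous).continuousOn)
    (fun x _ => hdf x) (fun x _ => hdg x)
    (by rw [Icc_prod]; exact hcont.continuousOn.integrableOn_compact isCompact_IccSq)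
  have hb1 : (∫ x in (0:ℝ)..1, g (x, (1:ℝ))) = 0 := by
    rw [intervalIntegral.integral_of_le zero_le_one,
      ← setIntegral_congr_set Ioo_ae_eq_Ioc,
      setIntegral_congr_fun measurableSet_Ioo
        (fun x hx => by simp [hgdef, (hbc.2 x hx).2] : EqOn (fun x => g (x, (1:ℝ))) 0 (Ioo 0 1))]
    simp
  have hb2 : (∫ x in (0:ℝ)..1, g (x, (0:ℝ))) = 0 := by
    rw [intervalIntegral.integral_of_le zero_le_one,
      ← setIntegral_congr_set Ioo_ae_eq_Ioc,
      setIntegral_congr_fun measurableSet_Ioo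
        (fun x hx => by
          have := (hbc.2 x hx).1
          simp only [neg_eq_zero] at this
          simp [hgdef, this] : EqOn (fun x => g (x, (0:ℝ))) 0 (Ioo 0 1))]
    simp
  have hb3 : (∫ y in (0:ℝ)..1, f ((1:ℝ), y)) = 0 := by
    rw [intervalIntegral.integral_of_le zero_le_one,
      ← setIntegral_congr_set Ioo_ae_eq_Ioc,
      setIntegral_congr_fun measurableSet_Ioo
        (fun y hy => by simp [hfdef, (hbc.1 y hy).2] : EqOn (fun y => f ((1:ℝ), y)) 0 (Ioo 0 1))]
    simp
  have hb4 : (∫ y in (0:ℝ)..1, f ((0:ℝ), y)) = 0 := by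
    rw [intervalIntegral.integral_of_le zero_le_one,
      ← setIntegral_congr_set Ioo_ae_eq_Ioc,
      setIntegral_congr_fun measurableSet_Ioo
        (fun y hy => by
          have := (hbc.1 y hy).1
          simp only [neg_eq_zero] at this
          simp [hfdef, this] : EqOn (fun y => f ((0:ℝ), y)) 0 (Ioo 0 1))]
    simp
  calc ∫ p in unitSq, (pdx φ p * pdx ψ p + pdy φ p * pdy ψ p + ψ p * lap φ p)
      = ∫ p in Icc ((0:ℝ), (0:ℝ)) ((1:ℝ), (1:ℝ)), (f' p (1, 0) + g' p (0, 1)) := by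
        rw [setIntegral_Icc_eq_unitSq]
        exact integral_congr_ae (Filter.Eventually.of_forall fun p => (hdiv p).symm) |>.symm ▸ rfl
    _ = 0 := by rw [key]; simp only [hb1, hb2, hb3, hb4]; ring



lemma hasDerivAt_param (H : ℝ × ℝ × ℝ → ℝ) (hH : ContDiff ℝ (⊤:ℕ∞) H) (t : ℝ) :
    HasDerivAt (fun s => ∫ p in unitSq, H (s, p))
      (∫ p in unitSq, fderiv ℝ H (t, p) evt) t := by
  have hfin : IsFiniteMeasure (volume.restrict unitSq) :=
    ⟨by rw [Measure.restrict_apply_univ]; exact volume_unitSq_lt_top⟩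
  set G : ℝ × ℝ × ℝ → ℝ := fun q => fderiv ℝ H q evt with hG
  have hGc : Continuous G := (contDiff_dapply hH evt).continuous
  have hK : IsCompact (Icc (t-1) (t+1) ×ˢ (Icc (0:ℝ) 1 ×ˢ Icc (0:ℝ) 1)) :=
    isCompact_Icc.prod isCompact_IccSq
  obtain ⟨C, hC⟩ := hK.exists_bound_of_continuousOn hGc.continuousOn
  have main := hasDerivAt_integral_of_dominated_loc_of_deriv_le
      (F := fun s p => H (s, p)) (F' := fun s p => G (s, p)) (bound := fun _ => C)
      (μ := volume.restrict unitSq) (x₀ := t) (Metric.ball_mem_nhds t one_pos)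
      (Filter.Eventually.of_forall fun s =>
        ((contDiff_slice hH s).continuous).aestronglyMeasurable)
      (integrableOn_unitSq (contDiff_slice hH t).continuous)
      ((hGc.comp (continuous_const.prodMk continuous_id)).aestronglyMeasurable)
      ?_ (integrable_const C)
      (Filter.Eventually.of_forall fun p s _ => hasDerivAt_slice hH s p)
  · exact main.2
  · filter_upwards [ae_restrict_mem measurableSet_unitSq] with p hp
    intro s hs
    refine hC _ ⟨?_, unitSq_subset_Icc hp⟩
    have := abs_lt.1 (by simpa [Real.dist_eq] using hs)
    exact ⟨by linarith [this.1], by linarith [this.2]⟩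



lemma contDiff_F : ContDiff ℝ (⊤:ℕ∞) F := by
  unfold F
  exact contDiff_const.mul (((contDiff_id.pow 2).sub contDiff_const).pow 2)

lemma contDiff_fDW : ContDiff ℝ (⊤:ℕ∞) fDW := by
  unfold fDW
  exact (contDiff_id.pow 3).sub contDiff_id

lemma hasDerivAt_F (y : ℝ) : HasDerivAt F (fDW y) y := by
  have h := (((hasDerivAt_pow 2 y).sub_const 1).pow 2).const_mul (1/4 : ℝ)
  refine h.congr_deriv ?_
  all_goals (unfold fDW; push_cast; ring)


end CH

open CH in
/-- **Energy decay for the Cahn–Hilliard equation.** With `w = -ε²Δu + f(u)`, if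
`∂ₜu = Δw` on `[0,T] × closure Ω` and `∂ₙu = ∂ₙw = 0` on the four open edges of `∂Ω`,
then for `t ∈ (0,T)` the energy is differentiable in time with derivative
`-∫_Ω |∇w(t,·)|² ≤ 0`; in particular the energy is non-increasing on `[0,T]`. -/
theorem energy_decay (ε T : ℝ) (hε : 0 < ε) (hT : 0 < T)
    (u : ℝ → ℝ × ℝ → ℝ) (hu : ContDiff ℝ (⊤ : ℕ∞) (Function.uncurry u))
    (w : ℝ → ℝ × ℝ → ℝ)
    (hw : ∀ t p, w t p = -ε^2 * lap (u t) p + fDW (u t p))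
    (heq : ∀ t ∈ Icc (0:ℝ) T, ∀ p ∈ closure unitSq, dtu u t p = lap (w t) p)
    (hbcu : ∀ t ∈ Icc (0:ℝ) T, ZeroNormalDeriv (u t))
    (hbcw : ∀ t ∈ Icc (0:ℝ) T, ZeroNormalDeriv (w t)) :
    (∀ t ∈ Ioo (0:ℝ) T,
      HasDerivAt (fun s => energy ε (u s))
        (-∫ p in unitSq, ((pdx (w t) p)^2 + (pdy (w t) p)^2)) t ∧
      -∫ p in unitSq, ((pdx (w t) p)^2 + (pdy (w t) p)^2) ≤ 0) ∧
    (∀ t₁ ∈ Icc (0:ℝ) T, ∀ t₂ ∈ Icc (0:ℝ) T, t₁ ≤ t₂ →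
      energy ε (u t₂) ≤ energy ε (u t₁)) := by
  set U : ℝ × ℝ × ℝ → ℝ := Function.uncurry u with hU
  set A : ℝ × ℝ × ℝ → ℝ := fun q => fderiv ℝ U q evx with hAdef
  set B : ℝ × ℝ × ℝ → ℝ := fun q => fderiv ℝ U q evy with hBdef
  set V : ℝ × ℝ × ℝ → ℝ := fun q => fderiv ℝ U q evt with hVdef
  have hAsm : ContDiff ℝ (⊤:ℕ∞) A := contDiff_dapply hu evx
  have hBsm : ContDiff ℝ (⊤:ℕ∞) B := contDiff_dapply hu evy
  have hVsm : ContDiff ℝ (⊤:ℕ∞) V := contDiff_dapply hu evt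
  have hA : ∀ s p, pdx (u s) p = A (s, p) := fun s p => pdx_slice hu s p
  have hB : ∀ s p, pdy (u s) p = B (s, p) := fun s p => pdy_slice hu s p
  have hV : ∀ s p, dtu u s p = V (s, p) := fun s p => deriv_slice hu s p
  set H : ℝ × ℝ × ℝ → ℝ := fun q => ε^2/2 * ((A q)^2 + (B q)^2) + F (U q) with hHdef
  have hHsm : ContDiff ℝ (⊤:ℕ∞) H :=
    (contDiff_const.mul ((hAsm.pow 2).add (hBsm.pow 2))).add (contDiff_F.comp hu)
  have hEnergy : ∀ s, energy ε (u s) = ∫ p in unitSq, H (s, p) := by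
    intro s
    rw [energy]
    refine setIntegral_congr_fun measurableSet_unitSq fun p _ => ?_
    rw [hA, hB, hHdef]
    rfl
  have key : ∀ t : ℝ, HasDerivAt (fun s => energy ε (u s))
      (∫ p in unitSq, fderiv ℝ H (t, p) evt) t := by
    intro t
    have h := hasDerivAt_param H hHsm t
    rwa [show (fun s => ∫ p in unitSq, H (s, p)) = fun s => energy ε (u s) from
      funext fun s => (hEnergy s).symm] at h
  -- pointwise formula for the time derivative of the integrand
  have hD : ∀ (t : ℝ) (p : ℝ × ℝ), fderiv ℝ H (t, p) evt =
      ε^2 * (A (t, p) * fderiv ℝ A (t, p) evt + B (t, p) * fderiv ℝ B (t, p) evt)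
        + fDW (U (t, p)) * V (t, p) := by
    intro t p
    have hAt : HasDerivAt (fun s => A (s, p)) (fderiv ℝ A (t, p) evt) t :=
      hasDerivAt_slice hAsm t p
    have hBt : HasDerivAt (fun s => B (s, p)) (fderiv ℝ B (t, p) evt) t :=
      hasDerivAt_slice hBsm t p
    have hUt : HasDerivAt (fun s => U (s, p)) (V (t, p)) t := hasDerivAt_slice hu t p
    have hHt : HasDerivAt (fun s => H (s, p))
        (ε^2/2 * (2 * A (t, p) ^ 1 * fderiv ℝ A (t, p) evt
          + 2 * B (t, p) ^ 1 * fderiv ℝ B (t, p) evt)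
          + fDW (U (t, p)) * V (t, p)) t := by
      have h1 := ((hAt.pow 2).add (hBt.pow 2)).const_mul (ε^2/2)
      have h2 := (hasDerivAt_F (U (t, p))).comp t hUt
      have := h1.add h2
      refine this.congr_deriv ?_
      all_goals (push_cast; ring)
    rw [← deriv_slice hHsm t p, hHt.deriv]
    ring
  -- Clairaut: time derivatives of A, B are spatial derivatives of V
  have hclx : ∀ (t : ℝ) (p : ℝ × ℝ), fderiv ℝ A (t, p) evt = pdx (fun q => V (t, q)) p := by
    intro t p
    rw [pdx_slice hVsm t p]
    exact clairaut hu (t, p) evt evx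
  have hcly : ∀ (t : ℝ) (p : ℝ × ℝ), fderiv ℝ B (t, p) evt = pdy (fun q => V (t, q)) p := by
    intro t p
    rw [pdy_slice hVsm t p]
    exact clairaut hu (t, p) evt evy
  -- the main derivative identity for t in [0, T]
  have deriv_eq : ∀ t ∈ Icc (0:ℝ) T,
      (∫ p in unitSq, fderiv ℝ H (t, p) evt)
        = -∫ p in unitSq, ((pdx (w t) p)^2 + (pdy (w t) p)^2) := by
    intro t ht
    set vt : ℝ × ℝ → ℝ := fun p => V (t, p) with hvtdef
    have hvtsm : ContDiff ℝ (⊤:ℕ∞) vt := contDiff_slice hVsm t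
    have hutsm : ContDiff ℝ (⊤:ℕ∞) (u t) := contDiff_slice hu t
    have hwteq : w t = fun p => -ε^2 * lap (u t) p + fDW (u t p) := funext (hw t)
    have hwtsm : ContDiff ℝ (⊤:ℕ∞) (w t) := by
      rw [hwteq]
      exact (contDiff_const.mul (contDiff_lap hutsm)).add (contDiff_fDW.comp hutsm)
    have gA := green hutsm hvtsm (hbcu t ht)
    have gB := green hwtsm hwtsm (hbcw t ht)
    -- pointwise rewriting of the integrand on unitSq
    have hpt : ∀ p ∈ unitSq, fderiv ℝ H (t, p) evt =
        ε^2 * (pdx (u t) p * pdx vt p + pdy (u t) p * pdy vt p + vt p * lap (u t) p)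
          + w t p * lap (w t) p := by
      intro p hp
      have hlapw : lap (w t) p = vt p := by
        rw [← heq t ht p (subset_closure hp), hV]
      rw [hD t p, hclx t p, hcly t p, hlapw, hw t p, ← hA, ← hB]
      show _ = ε ^ 2 * (pdx (u t) p * pdx vt p + pdy (u t) p * pdy vt p + vt p * lap (u t) p)
          + (-ε ^ 2 * lap (u t) p + fDW (u t p)) * vt p
      have hUu : U (t, p) = u t p := rfl
      rw [hUu]
      ring
    rw [setIntegral_congr_fun measurableSet_unitSq hpt]
    -- split the integral
    have int1 : IntegrableOn (fun p => ε^2 * (pdx (u t) p * pdx vt p + pdy (u t) p * pdy vt p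
        + vt p * lap (u t) p)) unitSq := by
      apply integrableOn_unitSq
      exact continuous_const.mul ((((contDiff_pdx hutsm).continuous.mul
        (contDiff_pdx hvtsm).continuous).add ((contDiff_pdy hutsm).continuous.mul
        (contDiff_pdy hvtsm).continuous)).add (hvtsm.continuous.mul
        (contDiff_lap hutsm).continuous))
    have int2 : IntegrableOn (fun p => w t p * lap (w t) p) unitSq :=
      integrableOn_unitSq (hwtsm.continuous.mul (contDiff_lap hwtsm).continuous)
    rw [integral_add int1 int2, integral_const_mul]
    rw [gA, mul_zero, zero_add]
    -- now handle gB
    have intsq : IntegrableOn (fun p => pdx (w t) p * pdx (w t) p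
        + pdy (w t) p * pdy (w t) p) unitSq :=
      integrableOn_unitSq (((contDiff_pdx hwtsm).continuous.mul (contDiff_pdx hwtsm).continuous).add
        ((contDiff_pdy hwtsm).continuous.mul (contDiff_pdy hwtsm).continuous))
    have intwl : IntegrableOn (fun p => w t p * lap (w t) p) unitSq := int2
    have gB' : (∫ p in unitSq, (pdx (w t) p * pdx (w t) p + pdy (w t) p * pdy (w t) p))
        + (∫ p in unitSq, w t p * lap (w t) p) = 0 := by
      rw [← integral_add intsq intwl]
      rw [← gB]
    have hsq : (∫ p in unitSq, (pdx (w t) p * pdx (w t) p + pdy (w t) p * pdy (w t) p))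
        = ∫ p in unitSq, ((pdx (w t) p)^2 + (pdy (w t) p)^2) :=
      setIntegral_congr_fun measurableSet_unitSq fun p _ => by ring
    linarith [gB', hsq]
  have nonneg : ∀ t : ℝ, 0 ≤ ∫ p in unitSq, ((pdx (w t) p)^2 + (pdy (w t) p)^2) := by
    intro t
    exact setIntegral_nonneg measurableSet_unitSq fun p _ => by positivity
  constructor
  · intro t ht
    have ht' : t ∈ Icc (0:ℝ) T := Ioo_subset_Icc_self ht
    refine ⟨?_, neg_nonpos.2 (nonneg t)⟩
    have h := key t
    rwa [deriv_eq t ht'] at h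
  · have hdiffable : ∀ s : ℝ, DifferentiableAt ℝ (fun s => energy ε (u s)) s :=
      fun s => (key s).differentiableAt
    have hcont : Continuous (fun s => energy ε (u s)) :=
      Differentiable.continuous (fun s => (key s).differentiableAt)
    have hanti := antitoneOn_of_deriv_nonpos (convex_Icc (0:ℝ) T) hcont.continuousOn
      (fun x _ => (hdiffable x).differentiableWithinAt)
      (fun x hx => by
        rw [(key x).deriv]
        rw [interior_Icc] at hx
        rw [deriv_eq x (Ioo_subset_Icc_self hx)]
        exact neg_nonpos.2 (nonneg x))
    exact fun t₁ h₁ t₂ h₂ h12 => hanti h₁ h₂ h12
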